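/- Discrete velocity invariance (pressure robustness) of the FEEC scheme: if the forcing f is replaced by f + ∇ψ, then the discrete solution changes as (u_h, p_h) → (u_h, p_h + P̃⁰_h ψ), where P̃⁰_h is the L² projection onto V²_h. -/

import Mathlib

open RealInnerProductSpace

/-- discrete velocity invariance (pressure robustness) of the FEEC
scheme: if the forcing `f` is replaced by `f + ∇ψ`, then the discrete solution
changes as `(u_h, p_h) → (u_h, p_h + P̃⁰_h ψ)`, where `P̃⁰_h` is the `L²`
(orthogonal) projection onto `V²_h`. -/
theorem stmt8 {H W V0 : Type*}
    [NormedAddCommGroup H] [InnerProductSpace ℝ H]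
    [NormedAddCommGroup W] [InnerProductSpace ℝ W]
    [NormedAddCommGroup V0] [InnerProductSpace ℝ V0]
    (V1h : Submodule ℝ W) (V2h : Submodule ℝ H) [CompleteSpace V2h]
    (div : W →ₗ[ℝ] H) (hdiv : ∀ v ∈ V1h, div v ∈ V2h)
    (tgrad : V2h →ₗ[ℝ] W) (htgmem : ∀ q, tgrad q ∈ V1h)
    (htg : ∀ (q : V2h), ∀ v ∈ V1h, ⟪tgrad q, v⟫ = -⟪(q : H), div v⟫)
    (tcurl : W →ₗ[ℝ] V0)
    (s : W → W → W) (ν : ℝ)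
    (u u' : ℝ → W) (p : ℝ → V2h) (f : ℝ → W)
    (ψ : H) (gψ : W)
    (hg : ∀ v ∈ V1h, ⟪gψ, v⟫ = -⟪ψ, div v⟫)
    (hmom : ∀ t, ∀ v ∈ V1h, ⟪u' t, v⟫ + ⟪u t, s (u t) v⟫ + ⟪tgrad (p t), v⟫
        + ν * ⟪tcurl (u t), tcurl v⟫ = ⟪f t, v⟫)
    (hpres : ∀ (t : ℝ) (q : V2h), ⟪u t, s (u t) (tgrad q)⟫
        + ⟪tgrad (p t), tgrad q⟫ = ⟪f t, tgrad q⟫) :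
    (∀ t, ∀ v ∈ V1h, ⟪u' t, v⟫ + ⟪u t, s (u t) v⟫
        + ⟪tgrad (p t + Submodule.orthogonalProjectionOnto V2h ψ), v⟫
        + ν * ⟪tcurl (u t), tcurl v⟫ = ⟪f t + gψ, v⟫)
      ∧ (∀ (t : ℝ) (q : V2h), ⟪u t, s (u t) (tgrad q)⟫
        + ⟪tgrad (p t + Submodule.orthogonalProjectionOnto V2h ψ), tgrad q⟫
        = ⟪f t + gψ, tgrad q⟫) := by
  have key : ∀ v ∈ V1h, ⟪tgrad (Submodule.orthogonalProjectionOnto V2h ψ), v⟫ = ⟪gψ, v⟫ := by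
    intro v hv
    rw [htg _ v hv, hg v hv]
    congr 1
    have h0 : ⟪ψ - (Submodule.orthogonalProjectionOnto V2h ψ : H), div v⟫ = 0 :=
      V2h.starProjection_inner_eq_zero ψ (div v) (hdiv v hv)
    rw [inner_sub_left] at h0
    linarith [h0]
  refine ⟨fun t v hv => ?_, fun t q => ?_⟩
  · rw [map_add, inner_add_left, inner_add_left]
    have := hmom t v hv
    have := key v hv
    linarith
  · rw [map_add, inner_add_left, inner_add_left]
    have := hpres t q
    have := key (tgrad q) (htgmem q)
    linarith
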